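/- Suppose for all vectors s in a finite set S ⊂ R^n with ||s||_2 ≤ 1 we have ||As||_2^2 ≤ (1+2η)||s||_2^2, where S is an ε-net of the unit ball of a union of (K)-dimensional coordinate subspaces Σ_K (i.e., every x ∈ Σ_K with ||x||_2 ≤ 1 has some s ∈ S in the same subspace with ||x−s||_2 ≤ ε). Define B as the smallest constant with ||Ax||_2^2 ≤ B ||x||_2^2 for all x ∈ Σ_K, ||x||_2 ≤ 1. Then √B ≤ √(1+2η)/(1−ε). -/
import Mathlib


/-- Squared Euclidean norm of a vector. -/
def sqnorm {n : Type*} [Fintype n] (x : n → ℝ) : ℝ := ∑ i, x i ^ 2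

/-- `x` has at most `K` nonzero entries. -/
def sparse {n : Type*} (K : ℕ) (x : n → ℝ) : Prop := (Function.support x).ncard ≤ K

private lemma sqnorm_nonneg {n : Type*} [Fintype n] (x : n → ℝ) : 0 ≤ sqnorm x :=
  Finset.sum_nonneg fun _ _ => sq_nonneg _

private lemma sqrt_sqnorm {n : Type*} [Fintype n] (x : n → ℝ) :
    Real.sqrt (sqnorm x) = ‖(WithLp.equiv 2 (n → ℝ)).symm x‖ := by
  rw [EuclideanSpace.norm_eq]
  congr 1
  simp [sqnorm, sq_abs]

private lemma sqnorm_eq_normsq {n : Type*} [Fintype n] (x : n → ℝ) :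
    sqnorm x = ‖(WithLp.equiv 2 (n → ℝ)).symm x‖ ^ 2 := by
  rw [← sqrt_sqnorm, Real.sq_sqrt (sqnorm_nonneg x)]

private lemma sqrt_sqnorm_add_le {n : Type*} [Fintype n] (u v : n → ℝ) :
    Real.sqrt (sqnorm (u + v)) ≤ Real.sqrt (sqnorm u) + Real.sqrt (sqnorm v) := by
  rw [sqrt_sqnorm, sqrt_sqnorm, sqrt_sqnorm]
  exact norm_add_le ((WithLp.equiv 2 (n → ℝ)).symm u) ((WithLp.equiv 2 (n → ℝ)).symm v)

private lemma sqnorm_smul {n : Type*} [Fintype n] (c : ℝ) (x : n → ℝ) :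
    sqnorm (c • x) = c ^ 2 * sqnorm x := by
  simp [sqnorm, mul_pow, Finset.mul_sum]

private lemma sqnorm_eq_zero {n : Type*} [Fintype n] {x : n → ℝ} (h : sqnorm x = 0) :
    x = 0 := by
  have := (Finset.sum_eq_zero_iff_of_nonneg (fun i _ => sq_nonneg (x i))).1 h
  funext i
  simpa using pow_eq_zero_iff (n := 2) (by norm_num) |>.1 (this i (Finset.mem_univ i))

/-- The ε-net argument: if `‖As‖² ≤ (1+2η)‖s‖²` on an ε-net `S` of the unit ball of
the union of `K`-dimensional coordinate subspaces (chosen so that `x - s` remains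
`K`-sparse), and `B` is the smallest constant with `‖Ax‖² ≤ B‖x‖²` on that set,
then `√B ≤ √(1+2η)/(1-ε)`. -/
theorem net_argument {m n K : ℕ} (A : Matrix (Fin m) (Fin n) ℝ) (η ε B : ℝ)
    (hη : 0 ≤ η) (hε : ε ∈ Set.Ico (0 : ℝ) 1)
    (S : Finset (Fin n → ℝ))
    (hSball : ∀ s ∈ S, sqnorm s ≤ 1)
    (hSbound : ∀ s ∈ S, sqnorm (A.mulVec s) ≤ (1 + 2 * η) * sqnorm s)
    (hnet : ∀ x : Fin n → ℝ, sparse K x → sqnorm x ≤ 1 →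
      ∃ s ∈ S, sparse K (x - s) ∧ Real.sqrt (sqnorm (x - s)) ≤ ε)
    (hB : IsLeast {B' : ℝ | 0 ≤ B' ∧ ∀ x : Fin n → ℝ, sparse K x → sqnorm x ≤ 1 →
      sqnorm (A.mulVec x) ≤ B' * sqnorm x} B) :
    Real.sqrt B ≤ Real.sqrt (1 + 2 * η) / (1 - ε) := by
  obtain ⟨hε0, hε1⟩ := hε
  obtain ⟨⟨hB0, hBspec⟩, hBleast⟩ := hB
  set t := Real.sqrt (1 + 2 * η) with ht
  set sB := Real.sqrt B with hsB
  have ht0 : 0 ≤ t := Real.sqrt_nonneg _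
  have hsB0 : 0 ≤ sB := Real.sqrt_nonneg _
  have hC0 : 0 ≤ t + ε * sB := by positivity
  -- key: the constant (t + ε*sB)^2 works
  have hClaim : ∀ x : Fin n → ℝ, sparse K x → sqnorm x ≤ 1 →
      sqnorm (A.mulVec x) ≤ (t + ε * sB) ^ 2 * sqnorm x := by
    intro x hxs hx1
    rcases eq_or_lt_of_le (sqnorm_nonneg x) with h0 | hpos
    · have hx0 : x = 0 := sqnorm_eq_zero h0.symm
      simp [hx0, Matrix.mulVec_zero, sqnorm]
    · set r := Real.sqrt (sqnorm x) with hr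
      have hr0 : 0 < r := Real.sqrt_pos.2 hpos
      set y := r⁻¹ • x with hy
      have hyn : sqnorm y = 1 := by
        rw [hy, sqnorm_smul, inv_pow, hr, Real.sq_sqrt (le_of_lt hpos),
          inv_mul_cancel₀ hpos.ne']
      have hys : sparse K y := by
        unfold sparse at hxs ⊢
        rwa [hy, Function.support_const_smul_of_ne_zero _ _ (inv_ne_zero hr0.ne')]
      obtain ⟨s, hsS, hsparse, hdist⟩ := hnet y hys hyn.le
      -- bound ‖A y‖
      have hAy : Real.sqrt (sqnorm (A.mulVec y)) ≤ t + ε * sB := by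
        have hsplit : A.mulVec y = A.mulVec s + A.mulVec (y - s) := by
          have h : y = s + (y - s) := by abel
          conv_lhs => rw [h]
          rw [Matrix.mulVec_add]
        have h1 : Real.sqrt (sqnorm (A.mulVec s)) ≤ t := by
          have := hSbound s hsS
          calc Real.sqrt (sqnorm (A.mulVec s)) ≤ Real.sqrt ((1 + 2 * η) * sqnorm s) :=
                Real.sqrt_le_sqrt this
            _ = t * Real.sqrt (sqnorm s) := by
                rw [Real.sqrt_mul (by linarith)]
            _ ≤ t * 1 := by
                have : Real.sqrt (sqnorm s) ≤ 1 := by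
                  rw [show (1:ℝ) = Real.sqrt 1 by simp]
                  exact Real.sqrt_le_sqrt (hSball s hsS)
                exact mul_le_mul_of_nonneg_left this ht0
            _ = t := mul_one t
        have hds : sqnorm (y - s) ≤ ε ^ 2 := by
          have := Real.sq_sqrt (sqnorm_nonneg (y - s))
          nlinarith [Real.sqrt_nonneg (sqnorm (y - s))]
        have h2 : Real.sqrt (sqnorm (A.mulVec (y - s))) ≤ sB * ε := by
          have hb := hBspec (y - s) hsparse (by nlinarith)
          calc Real.sqrt (sqnorm (A.mulVec (y - s))) ≤ Real.sqrt (B * sqnorm (y - s)) :=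
                Real.sqrt_le_sqrt hb
            _ = sB * Real.sqrt (sqnorm (y - s)) := Real.sqrt_mul hB0 _
            _ ≤ sB * ε := mul_le_mul_of_nonneg_left hdist hsB0
        calc Real.sqrt (sqnorm (A.mulVec y)) ≤
              Real.sqrt (sqnorm (A.mulVec s)) + Real.sqrt (sqnorm (A.mulVec (y - s))) := by
                rw [hsplit]; exact sqrt_sqnorm_add_le _ _
          _ ≤ t + sB * ε := add_le_add h1 h2
          _ = t + ε * sB := by ring
      have hAy2 : sqnorm (A.mulVec y) ≤ (t + ε * sB) ^ 2 := by
        have := Real.sq_sqrt (sqnorm_nonneg (A.mulVec y))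
        nlinarith [Real.sqrt_nonneg (sqnorm (A.mulVec y))]
      have hxy : x = r • y := by
        rw [hy, smul_smul, mul_inv_cancel₀ hr0.ne', one_smul]
      have hr2 : r ^ 2 = sqnorm x := Real.sq_sqrt (sqnorm_nonneg x)
      calc sqnorm (A.mulVec x) = r ^ 2 * sqnorm (A.mulVec y) := by
            rw [hxy, Matrix.mulVec_smul, sqnorm_smul]
        _ ≤ r ^ 2 * (t + ε * sB) ^ 2 := by
            exact mul_le_mul_of_nonneg_left hAy2 (by positivity)
        _ = (t + ε * sB) ^ 2 * sqnorm x := by rw [hr2]; ring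
  have hBle : B ≤ (t + ε * sB) ^ 2 := hBleast ⟨by positivity, hClaim⟩
  have hsBle : sB ≤ t + ε * sB := by
    rw [hsB, show t + ε * sB = Real.sqrt ((t + ε * sB) ^ 2) by
      rw [Real.sqrt_sq hC0]]
    exact Real.sqrt_le_sqrt hBle
  rw [le_div_iff₀ (by linarith)]
  nlinarith
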